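/- If Q is symmetric positive semidefinite, then λ_max(Q_z) ≤ λ_max(Q), where Q_z = Q − Q_d is the off-block-diagonal part of Q. -/

import Mathlib

open Matrix

noncomputable section

/-- The block-diagonal part `Q_d` of `Q` w.r.t. the partition of the index set given by
`blk` (the agent/block of each index): equal to `Q` on entries whose row and column
indices lie in the same block, zero elsewhere. -/
def blockDiagPart {N m : ℕ} (blk : Fin N → Fin m) (Q : Matrix (Fin N) (Fin N) ℝ) :
    Matrix (Fin N) (Fin N) ℝ :=
  Matrix.of fun p q => if blk p = blk q then Q p q else 0

/-- The largest eigenvalue of a real symmetric (Hermitian) matrix. -/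
noncomputable def maxEig {ι : Type*} [Fintype ι] [DecidableEq ι]
    {A : Matrix ι ι ℝ} (hA : A.IsHermitian) : ℝ :=
  ⨆ p, hA.eigenvalues p

lemma smul_one_sub_psd {n : Type*} [Fintype n] [DecidableEq n]
    {A : Matrix n n ℝ} (hA : A.IsHermitian) :
    (((⨆ p, hA.eigenvalues p) : ℝ) • (1 : Matrix n n ℝ) - A).PosSemidef := by
  set c : ℝ := ⨆ p, hA.eigenvalues p with hc
  have key : c • (1 : Matrix n n ℝ) - A =
      (hA.eigenvectorUnitary : Matrix n n ℝ) *
        Matrix.diagonal (fun i => c - hA.eigenvalues i) *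
        (hA.eigenvectorUnitary : Matrix n n ℝ)ᴴ := by
    have hd : Matrix.diagonal (fun i => c - hA.eigenvalues i) =
        c • (1 : Matrix n n ℝ) - Matrix.diagonal hA.eigenvalues := by
      ext i j
      by_cases h : i = j <;>
        simp [Matrix.diagonal_apply, Matrix.one_apply, h]
    rw [hd, Matrix.mul_sub, Matrix.sub_mul, Matrix.mul_smul, Matrix.smul_mul,
      Matrix.mul_one]
    have hu : (hA.eigenvectorUnitary : Matrix n n ℝ) *
        (hA.eigenvectorUnitary : Matrix n n ℝ)ᴴ = 1 := by
      exact Matrix.mem_unitaryGroup_iff.mp hA.eigenvectorUnitary.2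
    rw [hu]
    congr 1
    conv_lhs => rw [hA.spectral_theorem]
    rfl
  rw [key]
  apply Matrix.PosSemidef.mul_mul_conjTranspose_same
  rw [Matrix.posSemidef_diagonal_iff]
  intro i
  exact sub_nonneg.mpr (le_ciSup (Set.Finite.bddAbove (Set.finite_range _)) i)

lemma rayleigh_le {n : Type*} [Fintype n] [DecidableEq n]
    {A : Matrix n n ℝ} (hA : A.IsHermitian) (x : n → ℝ) :
    x ⬝ᵥ (A *ᵥ x) ≤ (⨆ p, hA.eigenvalues p) * (x ⬝ᵥ x) := by
  have h := (smul_one_sub_psd hA).dotProduct_mulVec_nonneg x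
  simp only [star_trivial, Matrix.sub_mulVec, Matrix.smul_mulVec, Matrix.one_mulVec,
    dotProduct_sub, dotProduct_smul, smul_eq_mul] at h
  linarith

lemma blockDiagPart_psd {N m : ℕ} (blk : Fin N → Fin m) {Q : Matrix (Fin N) (Fin N) ℝ}
    (hQ : Q.PosSemidef) (x : Fin N → ℝ) :
    0 ≤ x ⬝ᵥ (blockDiagPart blk Q *ᵥ x) := by
  classical
  set mask : Fin m → Fin N → ℝ := fun b p => if blk p = b then x p else 0 with hmask
  have key : ∀ p q, x p * ((if blk p = blk q then Q p q else 0) * x q)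
      = ∑ b, mask b p * (Q p q * mask b q) := by
    intro p q
    rw [Finset.sum_eq_single (blk p)]
    · by_cases h : blk p = blk q <;> simp [hmask, h, eq_comm]
    · intro b _ hb
      have : mask b p = 0 := by
        simp only [hmask]
        exact if_neg fun h => hb h.symm
      simp [this]
    · simp
  have key2 : x ⬝ᵥ (blockDiagPart blk Q *ᵥ x) = ∑ b, mask b ⬝ᵥ (Q *ᵥ mask b) := by
    simp only [dotProduct, mulVec, blockDiagPart, Matrix.of_apply, Finset.mul_sum]
    rw [show (∑ p, ∑ q, x p * ((if blk p = blk q then Q p q else 0) * x q))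
        = ∑ p, ∑ q, ∑ b, mask b p * (Q p q * mask b q) from
      Finset.sum_congr rfl fun p _ => Finset.sum_congr rfl fun q _ => key p q]
    calc (∑ p, ∑ q, ∑ b, mask b p * (Q p q * mask b q))
        = ∑ p, ∑ b, ∑ q, mask b p * (Q p q * mask b q) :=
          Finset.sum_congr rfl fun p _ => Finset.sum_comm
      _ = ∑ b, ∑ p, ∑ q, mask b p * (Q p q * mask b q) := Finset.sum_comm
  rw [key2]
  exact Finset.sum_nonneg fun b _ => by simpa using hQ.dotProduct_mulVec_nonneg (mask b)

/-- If `Q` is symmetric positive semidefinite, then `λ_max(Q_z) ≤ λ_max(Q)`, where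
`Q_z = Q − Q_d` is the off-block-diagonal part of `Q`. -/
theorem stmt_7 {N m : ℕ} (hN : 0 < N) (blk : Fin N → Fin m)
    (Q : Matrix (Fin N) (Fin N) ℝ) (hQ : Q.PosSemidef)
    (hQz : (Q - blockDiagPart blk Q).IsHermitian) :
    maxEig hQz ≤ maxEig hQ.1 := by
  have : Nonempty (Fin N) := ⟨⟨0, hN⟩⟩
  show (⨆ p, hQz.eigenvalues p) ≤ ⨆ p, hQ.1.eigenvalues p
  refine ciSup_le fun p => ?_
  set v : Fin N → ℝ := ⇑(hQz.eigenvectorBasis p) with hv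
  have heig : hQz.eigenvalues p = v ⬝ᵥ ((Q - blockDiagPart blk Q) *ᵥ v) := by
    simpa using hQz.eigenvalues_eq p
  have hvv : v ⬝ᵥ v = 1 := by
    have h1 : ‖hQz.eigenvectorBasis p‖ = 1 := hQz.eigenvectorBasis.orthonormal.1 p
    have h2 : v ⬝ᵥ v = ‖hQz.eigenvectorBasis p‖ ^ 2 := by
      rw [← real_inner_self_eq_norm_sq]
      simp only [dotProduct, PiLp.inner_apply, RCLike.inner_apply, conj_trivial, hv]
    rw [h2, h1, one_pow]
  have h1 : v ⬝ᵥ ((Q - blockDiagPart blk Q) *ᵥ v) ≤ v ⬝ᵥ (Q *ᵥ v) := by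
    rw [Matrix.sub_mulVec, dotProduct_sub]
    linarith [blockDiagPart_psd blk hQ v]
  have h2 := rayleigh_le hQ.1 v
  rw [hvv, mul_one] at h2
  rw [heig]
  exact le_trans h1 h2
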